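/- Assume δ, ρ ∈ (0,1) are sufficiently small, γ ∈ (0,1) is sufficiently small depending on δ, ρ, and μ ∈ (0,1) is sufficiently small depending on δ, ρ, γ. Let H ≥ H₀/2 with H₀ := (1/7)√(δn). Then there is a constant c(δ,ρ) > 0 such that for every w ∈ ℝ^n with ‖v − w‖₂ ≤ 4μ√n/H for some v ∈ S_H, one has CLCD_{μn/2, γ/2}(w) ≥ H/16 and ‖D(w)‖₂ ≥ c(δ,ρ)√n. -/

import Mathlib

open Real

noncomputable section

/-- A vector `v` is almost-constant (with parameters `δ, ρ`) if some `λ ∈ ℝ` satisfies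
`|v i − λ| ≤ ρ/√n` for at least `(1−δ)n` coordinates `i`. -/
def almostConst {n : ℕ} (δ ρ : ℝ) (v : Fin n → ℝ) : Prop :=
  ∃ lam : ℝ, (1 - δ) * n ≤ (Nat.card {i : Fin n // |v i - lam| ≤ ρ / Real.sqrt n} : ℝ)

/-- Euclidean norm of a finitely indexed real vector. -/
def pnorm {ι : Type*} [Fintype ι] (x : ι → ℝ) : ℝ := Real.sqrt (∑ i, x i ^ 2)

/-- Index type for the coordinates of `D(v)`: pairs `(i, j)` with `i < j`. -/
abbrev PairIdx (n : ℕ) := {p : Fin n × Fin n // p.1 < p.2}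

/-- `D(v)`: the vector in `ℝ^{n(n-1)/2}` whose `(i,j)`-coordinate is `v i - v j`
for `i < j`. -/
def Dvec {n : ℕ} (v : Fin n → ℝ) : PairIdx n → ℝ := fun p => v p.1.1 - v p.1.2

/-- Euclidean distance from a vector to the integer lattice. -/
def latDist {ι : Type*} [Fintype ι] (x : ι → ℝ) : ℝ :=
  ⨅ m : ι → ℤ, pnorm (fun i => x i - (m i : ℝ))

/-- The combinatorial least common denominator
`CLCD_{α,γ}(v) = inf {θ > 0 : dist(θ D(v), ℤ^{n(n-1)/2}) < min(γ ‖θ D(v)‖₂, α)}`,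
as an extended nonnegative real (`∞` if no such `θ` exists). -/
def CLCD (n : ℕ) (α γ : ℝ) (v : Fin n → ℝ) : ENNReal :=
  sInf {θ : ENNReal | ∃ t : ℝ, 0 < t ∧ θ = ENNReal.ofReal t ∧
    latDist (fun p => t * Dvec v p) < min (γ * pnorm (fun p => t * Dvec v p)) α}

/-- The level set `S_H = {v ∈ N(δ,ρ) : H ≤ CLCD_{μn,γ}(v) ≤ 2H}` of non-almost-constant
unit vectors whose CLCD is comparable to `H`. -/
def levelSet (n : ℕ) (δ ρ μ γ H : ℝ) : Set (Fin n → ℝ) :=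
  {v | pnorm v = 1 ∧ ¬ almostConst δ ρ v ∧
    ENNReal.ofReal H ≤ CLCD n (μ * n) γ v ∧ CLCD n (μ * n) γ v ≤ ENNReal.ofReal (2 * H)}

/- ### auxiliary lemmas -/


lemma pnorm_nonneg' {ι : Type*} [Fintype ι] (x : ι → ℝ) : 0 ≤ pnorm x := Real.sqrt_nonneg _

lemma pnorm_sq' {ι : Type*} [Fintype ι] (x : ι → ℝ) : pnorm x ^ 2 = ∑ i, x i ^ 2 :=
  Real.sq_sqrt (Finset.sum_nonneg fun i _ => sq_nonneg _)

lemma pnorm_eq_norm' {ι : Type*} [Fintype ι] (x : ι → ℝ) :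
    pnorm x = ‖(WithLp.equiv 2 (ι → ℝ)).symm x‖ := by
  rw [EuclideanSpace.norm_eq]
  unfold pnorm
  congr 1
  exact Finset.sum_congr rfl fun i _ => by
    rw [WithLp.equiv_symm_apply, WithLp.ofLp_toLp]; rw [Real.norm_eq_abs, sq_abs]

lemma pnorm_add_le' {ι : Type*} [Fintype ι] (x y : ι → ℝ) :
    pnorm (fun i => x i + y i) ≤ pnorm x + pnorm y := by
  rw [pnorm_eq_norm', pnorm_eq_norm', pnorm_eq_norm']
  exact norm_add_le _ _

lemma pnorm_smul' {ι : Type*} [Fintype ι] (t : ℝ) (x : ι → ℝ) :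
    pnorm (fun i => t * x i) = |t| * pnorm x := by
  unfold pnorm
  rw [show ∑ i, (t * x i)^2 = t^2 * ∑ i, x i ^2 by rw [Finset.mul_sum]; ring_nf,
    Real.sqrt_mul (sq_nonneg t), Real.sqrt_sq_eq_abs]

lemma latDist_bdd' {ι : Type*} [Fintype ι] (x : ι → ℝ) :
    BddBelow (Set.range fun m : ι → ℤ => pnorm fun i => x i - (m i : ℝ)) :=
  ⟨0, by rintro a ⟨m, rfl⟩; exact pnorm_nonneg' _⟩

lemma latDist_le' {ι : Type*} [Fintype ι] (x : ι → ℝ) (m : ι → ℤ) :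
    latDist x ≤ pnorm (fun i => x i - m i) := ciInf_le (latDist_bdd' x) m

lemma latDist_triangle' {ι : Type*} [Fintype ι] (x y : ι → ℝ) :
    latDist x ≤ latDist y + pnorm (fun i => x i - y i) := by
  have h : ∀ m : ι → ℤ, latDist x - pnorm (fun i => x i - y i) ≤ pnorm (fun i => y i - m i) := by
    intro m
    have h1 := latDist_le' x m
    have h2 : pnorm (fun i => x i - (m i : ℝ))
        ≤ pnorm (fun i => y i - m i) + pnorm (fun i => x i - y i) := by
      have h3 := pnorm_add_le' (fun i => y i - (m i : ℝ)) (fun i => x i - y i)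
      have e : (fun i => (y i - (m i : ℝ)) + (x i - y i)) = fun i => x i - (m i : ℝ) := by
        funext i; ring
      rwa [e] at h3
    linarith
  have h4 : latDist x - pnorm (fun i => x i - y i) ≤ latDist y := le_ciInf h
  linarith

lemma two_sum_pairs' {n : ℕ} (g : Fin n × Fin n → ℝ)
    (hsymm : ∀ p : Fin n × Fin n, g p = g p.swap)
    (hdiag : ∀ i, g (i, i) = 0) :
    2 * ∑ p : PairIdx n, g p.1 = ∑ p : Fin n × Fin n, g p := by
  classical
  have h1 : ∑ p : PairIdx n, g p.1
      = ∑ p ∈ Finset.univ.filter (fun p : Fin n × Fin n => p.1 < p.2), g p := by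
    rw [Finset.sum_subtype (Finset.univ.filter (fun p : Fin n × Fin n => p.1 < p.2))
      (p := fun p : Fin n × Fin n => p.1 < p.2) (fun x => by simp) g]
  have h2 : ∑ p ∈ Finset.univ.filter (fun p : Fin n × Fin n => p.2 < p.1), g p
      = ∑ p ∈ Finset.univ.filter (fun p : Fin n × Fin n => p.1 < p.2), g p := by
    refine Finset.sum_nbij' (fun p => Prod.swap p) (fun p => Prod.swap p) ?_ ?_ ?_ ?_ ?_ <;>
      intro p hp <;> simp only [Finset.mem_filter, Finset.mem_univ, true_and,
        Prod.fst_swap, Prod.snd_swap, Prod.swap_swap] at *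
    · exact hp
    · exact hp
    · exact hsymm p
  have h3 : ∑ p ∈ Finset.univ.filter (fun p : Fin n × Fin n => ¬ p.1 < p.2), g p
      = ∑ p ∈ Finset.univ.filter (fun p : Fin n × Fin n => p.2 < p.1), g p := by
    symm
    apply Finset.sum_subset
    · intro p hp
      simp only [Finset.mem_filter, Finset.mem_univ, true_and] at *
      exact not_lt_of_gt hp
    · intro p hp hnp
      simp only [Finset.mem_filter, Finset.mem_univ, true_and, not_lt] at hp hnp
      have hpe : p.1 = p.2 := le_antisymm hnp hp
      have hpp : p = (p.1, p.1) := by rw [Prod.ext_iff]; exact ⟨rfl, hpe.symm⟩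
      rw [hpp]; exact hdiag p.1
  have h4 := Finset.sum_filter_add_sum_filter_not Finset.univ
    (fun p : Fin n × Fin n => p.1 < p.2) g
  rw [h1]
  linarith [h4, h2, h3]

lemma Dvec_sq_eq' {n : ℕ} (v : Fin n → ℝ) :
    (∑ p : PairIdx n, (Dvec v p) ^ 2) = n * (∑ i, v i ^ 2) - (∑ i, v i) ^ 2 := by
  have h := two_sum_pairs' (fun p : Fin n × Fin n => (v p.1 - v p.2) ^ 2)
    (fun p => by simp only [Prod.fst_swap, Prod.snd_swap]; ring) (fun i => by ring)
  have h3 : ∑ p : Fin n × Fin n, (v p.1 - v p.2)^2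
      = 2 * ((n : ℝ) * (∑ i, v i ^ 2) - (∑ i, v i)^2) := by
    rw [Fintype.sum_prod_type]
    have e : ∀ i : Fin n, ∑ j, (v i - v j)^2
        = n * v i ^ 2 - 2 * v i * (∑ j, v j) + ∑ j, v j ^ 2 := by
      intro i
      have e1 : ∀ j : Fin n, (v i - v j)^2 = v i ^ 2 - (2 * v i) * v j + v j ^ 2 :=
        fun j => by ring
      rw [Finset.sum_congr rfl (fun j _ => e1 j), Finset.sum_add_distrib,
        Finset.sum_sub_distrib, ← Finset.mul_sum, Finset.sum_const, Finset.card_univ,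
        Fintype.card_fin, nsmul_eq_mul]
      try ring
    rw [Finset.sum_congr rfl (fun i _ => e i), Finset.sum_add_distrib,
      Finset.sum_sub_distrib, ← Finset.mul_sum, ← Finset.sum_mul, Finset.sum_const,
      Finset.card_univ, Fintype.card_fin, nsmul_eq_mul, ← Finset.mul_sum]
    try ring
  have hD : (Dvec v) = fun p : PairIdx n => v p.1.1 - v p.1.2 := rfl
  rw [hD] at *
  linarith [h, h3]

lemma Dvec_pnorm_sq' {n : ℕ} (v : Fin n → ℝ) :
    pnorm (Dvec v) ^ 2 = n * (∑ i, v i ^ 2) - (∑ i, v i) ^ 2 := by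
  rw [pnorm_sq']; exact Dvec_sq_eq' v

lemma Dvec_le' {n : ℕ} (u : Fin n → ℝ) :
    pnorm (Dvec u) ≤ Real.sqrt n * pnorm u := by
  have h1 : pnorm (Dvec u) ^ 2 ≤ n * pnorm u ^ 2 := by
    rw [Dvec_pnorm_sq', pnorm_sq']
    nlinarith [sq_nonneg (∑ i, u i)]
  have h2 : pnorm (Dvec u) = Real.sqrt (pnorm (Dvec u) ^ 2) :=
    (Real.sqrt_sq (pnorm_nonneg' _)).symm
  rw [h2]
  calc Real.sqrt (pnorm (Dvec u) ^ 2) ≤ Real.sqrt (n * pnorm u ^ 2) :=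
        Real.sqrt_le_sqrt h1
    _ = Real.sqrt n * pnorm u := by
        rw [Real.sqrt_mul (Nat.cast_nonneg n), Real.sqrt_sq (pnorm_nonneg' u)]

lemma nac_bound' {n : ℕ} (hn : 0 < n) {δ ρ : ℝ} (hδ : 0 < δ) (hρ : 0 < ρ)
    {v : Fin n → ℝ} (hv : ¬ almostConst δ ρ v) :
    Real.sqrt δ * ρ * Real.sqrt n ≤ pnorm (Dvec v) := by
  classical
  by_contra h
  push_neg at h
  apply hv
  have hn' : (0 : ℝ) < n := Nat.cast_pos.mpr hn
  set lam := (∑ i, v i) / n with hlam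
  refine ⟨lam, ?_⟩
  have hvar : ∑ i, (v i - lam) ^ 2 < δ * ρ ^ 2 := by
    have hsq : pnorm (Dvec v) ^ 2 < δ * ρ ^ 2 * n := by
      have hnn := pnorm_nonneg' (Dvec v)
      have hb : (Real.sqrt δ * ρ * Real.sqrt n) ^ 2 = δ * ρ ^ 2 * n := by
        rw [mul_pow, mul_pow, Real.sq_sqrt hδ.le, Real.sq_sqrt (Nat.cast_nonneg n)]
      nlinarith [mul_pos (mul_pos (Real.sqrt_pos.mpr hδ) hρ) (Real.sqrt_pos.mpr hn')]
    have hexp : (n : ℝ) * ∑ i, (v i - lam) ^ 2 = pnorm (Dvec v) ^ 2 := by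
      rw [Dvec_pnorm_sq']
      have e1 : ∀ i : Fin n, (v i - lam) ^ 2 = v i ^ 2 - (2 * lam) * v i + lam ^ 2 :=
        fun i => by ring
      rw [Finset.sum_congr rfl (fun i _ => e1 i), Finset.sum_add_distrib,
        Finset.sum_sub_distrib, ← Finset.mul_sum, Finset.sum_const, Finset.card_univ,
        Fintype.card_fin, nsmul_eq_mul, hlam]
      field_simp
      ring
    nlinarith
  set B := Finset.univ.filter (fun i : Fin n => ¬ |v i - lam| ≤ ρ / Real.sqrt n) with hB
  have hBest : (B.card : ℝ) * (ρ ^ 2 / n) ≤ ∑ i, (v i - lam) ^ 2 := by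
    have hle : ∑ i ∈ B, (ρ ^ 2 / n) ≤ ∑ i ∈ B, (v i - lam) ^ 2 := by
      refine Finset.sum_le_sum fun i hi => ?_
      have hi2 : ρ / Real.sqrt n < |v i - lam| :=
        lt_of_not_ge (Finset.mem_filter.mp hi).2
      have h0 : (0 : ℝ) ≤ ρ / Real.sqrt n := by positivity
      have hsqn : (Real.sqrt n : ℝ) ^ 2 = n := Real.sq_sqrt (Nat.cast_nonneg n)
      have hq : (ρ / Real.sqrt n) ^ 2 = ρ ^ 2 / n := by rw [div_pow, hsqn]
      nlinarith [sq_abs (v i - lam), abs_nonneg (v i - lam)]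
    calc (B.card : ℝ) * (ρ ^ 2 / n) = ∑ _i ∈ B, (ρ ^ 2 / n) := by
          rw [Finset.sum_const, nsmul_eq_mul]
      _ ≤ ∑ i ∈ B, (v i - lam) ^ 2 := hle
      _ ≤ ∑ i, (v i - lam) ^ 2 :=
          Finset.sum_le_sum_of_subset_of_nonneg (Finset.subset_univ B)
            (fun i _ _ => sq_nonneg _)
  have hBlt : (B.card : ℝ) < δ * n := by
    have h1 : (B.card : ℝ) * (ρ ^ 2 / n) < δ * ρ ^ 2 := lt_of_le_of_lt hBest hvar
    have h3 := mul_lt_mul_of_pos_right h1 hn'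
    have h4 : ρ ^ 2 / n * n = ρ ^ 2 := div_mul_cancel₀ _ hn'.ne'
    nlinarith [sq_nonneg ρ]
  have hcard : (Nat.card {i : Fin n // |v i - lam| ≤ ρ / Real.sqrt n} : ℝ)
      = ((Finset.univ.filter (fun i : Fin n => |v i - lam| ≤ ρ / Real.sqrt n)).card : ℝ) := by
    rw [Nat.card_eq_fintype_card, Fintype.card_subtype]
  have hsplit := Finset.card_filter_add_card_filter_not
    (s := (Finset.univ : Finset (Fin n)))
    (p := fun i : Fin n => |v i - lam| ≤ ρ / Real.sqrt n)
  rw [hcard]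
  have hsplit' : ((Finset.univ.filter (fun i : Fin n => |v i - lam| ≤ ρ / Real.sqrt n)).card : ℝ)
      + (B.card : ℝ) = n := by
    have h5 : (Finset.univ.filter (fun i : Fin n => |v i - lam| ≤ ρ / Real.sqrt n)).card
        + B.card = n := by
      rw [hB]; simpa using hsplit
    exact_mod_cast congrArg (Nat.cast : ℕ → ℝ) h5
  nlinarith


set_option maxHeartbeats 1000000 in
/-- for sufficiently small `δ, ρ`, there is `c(δ,ρ) > 0` such that for
sufficiently small `γ` (depending on `δ, ρ`) and sufficiently small `μ` (depending on
`δ, ρ, γ`), for every `H ≥ H₀/2` (`H₀ = (1/7)√(δn)`) and every `w` within distance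
`4μ√n/H` of some `v ∈ S_H`, one has `CLCD_{μn/2, γ/2}(w) ≥ H/16` and
`‖D(w)‖₂ ≥ c(δ,ρ)√n`. -/
theorem stmt14 :
    ∃ ε₁ : ℝ, 0 < ε₁ ∧ ∀ δ ρ : ℝ, 0 < δ → δ < ε₁ → 0 < ρ → ρ < ε₁ →
    ∃ c : ℝ, 0 < c ∧
    ∃ ε₂ : ℝ, 0 < ε₂ ∧ ∀ γ : ℝ, 0 < γ → γ < ε₂ →
    ∃ ε₃ : ℝ, 0 < ε₃ ∧ ∀ μ : ℝ, 0 < μ → μ < ε₃ →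
    ∀ n : ℕ, 0 < n →
    ∀ H : ℝ, 1 / 7 * Real.sqrt (δ * n) / 2 ≤ H →
    ∀ w : Fin n → ℝ,
      (∃ v ∈ levelSet n δ ρ μ γ H, pnorm (fun i => v i - w i) ≤ 4 * μ * Real.sqrt n / H) →
      ENNReal.ofReal (H / 16) ≤ CLCD n (μ * n / 2) (γ / 2) w ∧
      c * Real.sqrt n ≤ pnorm (Dvec w) := by
  refine ⟨1, one_pos, fun δ ρ hδ hδ1 hρ hρ1 => ?_⟩
  have hs : 0 < Real.sqrt δ := Real.sqrt_pos.mpr hδ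
  refine ⟨Real.sqrt δ * ρ / 2, by positivity, ?_⟩
  refine ⟨1, one_pos, fun γ hγ hγ1 => ?_⟩
  refine ⟨γ * δ * ρ / 224, by positivity, fun μ hμ hμ3 => ?_⟩
  intro n hn H hH w hw
  obtain ⟨v, ⟨hv1, hvnac, hvlo, hvhi⟩, hvw⟩ := hw
  have hn' : (0 : ℝ) < n := Nat.cast_pos.mpr hn
  set sn := Real.sqrt n with hsn
  have hsnpos : 0 < sn := Real.sqrt_pos.mpr hn'
  have hsn2 : sn ^ 2 = n := Real.sq_sqrt (Nat.cast_nonneg n)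
  have hs2 : Real.sqrt δ ^ 2 = δ := Real.sq_sqrt hδ.le
  set s := Real.sqrt δ with hsdef
  -- H bounds
  have hHlb : s * sn / 14 ≤ H := by
    rw [Real.sqrt_mul hδ.le, ← hsn, ← hsdef] at hH
    linarith
  have hH0 : 0 < H := lt_of_lt_of_le (by positivity) hHlb
  -- lower bound on pnorm (Dvec v)
  have hDv : s * ρ * sn ≤ pnorm (Dvec v) := nac_bound' hn hδ hρ hvnac
  -- E = pnorm (Dvec (v - w))
  set E := pnorm (Dvec (fun i => v i - w i)) with hE
  have hE0 : 0 ≤ E := pnorm_nonneg' _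
  have hE1 : E ≤ 4 * μ * n / H := by
    have h1 : E ≤ sn * pnorm (fun i => v i - w i) := Dvec_le' _
    have h2 : sn * pnorm (fun i => v i - w i) ≤ sn * (4 * μ * sn / H) :=
      mul_le_mul_of_nonneg_left hvw hsnpos.le
    have h3 : sn * (4 * μ * sn / H) = 4 * μ * n / H := by
      field_simp
      linear_combination hsn2
    linarith
  have hE2 : E < γ * s * ρ * sn / 4 := by
    have h1 : 4 * μ * n / H ≤ 4 * μ * n / (s * sn / 14) := by
      apply div_le_div_of_nonneg_left (by positivity) (by positivity) hHlb
    have h2 : 4 * μ * n / (s * sn / 14) = 56 * μ * sn / s := by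
      rw [div_div_eq_mul_div]
      rw [div_eq_div_iff (by positivity) hs.ne']
      linear_combination (-56) * μ * s * hsn2
    have h3 : 56 * μ * sn / s < γ * s * ρ * sn / 4 := by
      rw [div_lt_iff₀ hs]
      have h4 : 224 * μ < γ * δ * ρ := by linarith
      have h5 := mul_lt_mul_of_pos_right h4 hsnpos
      have h6 : γ * s * ρ * sn / 4 * s = γ * δ * ρ * sn / 4 := by
        rw [← hs2]; ring
      rw [h6]; linarith
    linarith
  -- triangle: pnorm (Dvec v) ≤ pnorm (Dvec w) + E  and reverse
  have htriv : pnorm (Dvec v) ≤ pnorm (Dvec w) + E := by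
    have h1 := pnorm_add_le' (Dvec w) (Dvec (fun i => v i - w i))
    have e : (fun p => Dvec w p + Dvec (fun i => v i - w i) p) = Dvec v := by
      funext p; simp [Dvec]; ring
    rwa [e] at h1
  have htriw : pnorm (Dvec w) ≤ pnorm (Dvec v) + E := by
    have h1 := pnorm_add_le' (Dvec v) (fun p => - Dvec (fun i => v i - w i) p)
    have e : (fun p => Dvec v p + - Dvec (fun i => v i - w i) p) = Dvec w := by
      funext p; simp [Dvec]; ring
    have e2 : pnorm (fun p => - Dvec (fun i => v i - w i) p) = E := by
      unfold pnorm; simp [hE, pnorm]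
    rw [e, e2] at h1
    exact h1
  have hsρsn : 0 < s * ρ * sn := by positivity
  constructor
  · -- CLCD lower bound
    refine le_sInf ?_
    rintro θ ⟨t, ht, rfl, hlt⟩
    rw [ENNReal.ofReal_le_ofReal_iff ht.le]
    by_contra hcon
    push_neg at hcon
    -- t < H / 16 ; derive contradiction
    rw [lt_min_iff] at hlt
    obtain ⟨hLw1, hLw2⟩ := hlt
    have hpw : pnorm (fun p => t * Dvec w p) = t * pnorm (Dvec w) := by
      rw [pnorm_smul', abs_of_pos ht]
    have hpv : pnorm (fun p => t * Dvec v p) = t * pnorm (Dvec v) := by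
      rw [pnorm_smul', abs_of_pos ht]
    -- latDist triangle
    have hLv : latDist (fun p => t * Dvec v p)
        ≤ latDist (fun p => t * Dvec w p) + t * E := by
      have h1 := latDist_triangle' (fun p => t * Dvec v p) (fun p => t * Dvec w p)
      have e : (fun p => t * Dvec v p - t * Dvec w p)
          = fun p => t * Dvec (fun i => v i - w i) p := by
        funext p; simp [Dvec]; ring
      rw [e, pnorm_smul', abs_of_pos ht] at h1
      exact h1
    have htE : t * E ≤ μ * n / 4 := by
      have h1 : t * E ≤ (H / 16) * E := mul_le_mul_of_nonneg_right hcon.le hE0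
      have h2 : (H / 16) * E ≤ (H / 16) * (4 * μ * n / H) :=
        mul_le_mul_of_nonneg_left hE1 (by positivity)
      have h3 : (H / 16) * (4 * μ * n / H) = μ * n / 4 := by
        field_simp
        ring
      linarith
    have hμn : 0 < μ * n := by positivity
    -- witness for v
    have hwit : latDist (fun p => t * Dvec v p)
        < min (γ * pnorm (fun p => t * Dvec v p)) (μ * n) := by
      rw [lt_min_iff, hpv]
      rw [hpw] at hLw1
      constructor
      · -- Lv ≤ Lw + tE < (γ/2) t Dw + tE ≤ (γ/2)t(Dv+E) + tE
        have hEq : E ≤ γ * pnorm (Dvec v) / 4 := by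
          have hq1 : γ * s * ρ * sn / 4 ≤ γ * pnorm (Dvec v) / 4 := by
            have := mul_le_mul_of_nonneg_left hDv (by positivity : (0:ℝ) ≤ γ / 4)
            nlinarith
          linarith
        have c3a : t * pnorm (Dvec w) ≤ t * pnorm (Dvec v) + t * E := by
          have hq2 := mul_le_mul_of_nonneg_left htriw ht.le
          rw [mul_add] at hq2; exact hq2
        have c3 : γ / 2 * (t * pnorm (Dvec w))
            ≤ γ / 2 * (t * pnorm (Dvec v)) + γ / 2 * (t * E) := by
          have hq3 := mul_le_mul_of_nonneg_left c3a (by positivity : (0:ℝ) ≤ γ / 2)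
          rw [mul_add] at hq3; exact hq3
        have htE0 : 0 ≤ t * E := mul_nonneg ht.le hE0
        have c4 : γ / 2 * (t * E) ≤ t * E / 2 := by
          have hq4 : γ / 2 ≤ 1 / 2 := by linarith
          have := mul_le_mul_of_nonneg_right hq4 htE0
          linarith
        have c5 : t * E ≤ (γ / 2 * (t * pnorm (Dvec v))) / 2 := by
          have hq5 := mul_le_mul_of_nonneg_left hEq ht.le
          have hq6 : t * (γ * pnorm (Dvec v) / 4) = (γ / 2 * (t * pnorm (Dvec v))) / 2 := by
            ring
          rw [hq6] at hq5; exact hq5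
        have hX0 : 0 ≤ γ / 2 * (t * pnorm (Dvec v)) :=
          mul_nonneg (by linarith) (mul_nonneg ht.le (pnorm_nonneg' _))
        have hfin : γ * (t * pnorm (Dvec v)) = 2 * (γ / 2 * (t * pnorm (Dvec v))) := by
          ring
        rw [hfin]
        linarith
      · linarith
    have hle : CLCD n (μ * n) γ v ≤ ENNReal.ofReal t := sInf_le ⟨t, ht, rfl, hwit⟩
    have hHt : H ≤ t := by
      have := le_trans hvlo hle
      exact (ENNReal.ofReal_le_ofReal_iff ht.le).mp this
    linarith
  · -- norm lower bound
    have h1 : s * ρ * sn - γ * s * ρ * sn / 4 ≤ pnorm (Dvec w) := by linarith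
    have h2 : s * ρ / 2 * sn ≤ s * ρ * sn - γ * s * ρ * sn / 4 := by
      have hq : γ * (s * ρ * sn) ≤ 1 * (s * ρ * sn) :=
        mul_le_mul_of_nonneg_right hγ1.le hsρsn.le
      nlinarith
    linarith


end
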